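/- Let N ≥ 3. The 2-monomial minimal solution of (E_N) (that is, the constant tuple with all entries equal to 2 mod N of minimal size) is irreducible, has size N, and satisfies M_N(2, …, 2) = Id over Z/NZ. -/

import Mathlib

open Matrix

/-- The elementary matrix `[[a, -1], [1, 0]]` over `ZMod N`. -/
def genMat {N : ℕ} (a : ZMod N) : Matrix (Fin 2) (Fin 2) (ZMod N) :=
  !![a, -1; 1, 0]

/-- `Mword [a₁, …, aₙ]` is the matrix `Mₙ(a₁, …, aₙ) = genMat aₙ * ⋯ * genMat a₁`. -/
def Mword {N : ℕ} (l : List (ZMod N)) : Matrix (Fin 2) (Fin 2) (ZMod N) :=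
  (l.reverse.map genMat).prod

/-- A tuple (encoded as a list) is a solution of `(E_N)` if its matrix is `±Id`. -/
def IsSolutionE {N : ℕ} (l : List (ZMod N)) : Prop :=
  Mword l = 1 ∨ Mword l = -1

/-- The size of the `k`-monomial minimal solution of `(E_N)`: the least positive `n`
such that the constant `n`-tuple `(k, …, k)` is a solution of `(E_N)`. -/
noncomputable def monomialSize (N : ℕ) (k : ZMod N) : ℕ :=
  sInf {n : ℕ | 0 < n ∧ IsSolutionE (List.replicate n k)}

/-- The `k`-monomial minimal solution of `(E_N)`. -/
noncomputable def monoSol (N : ℕ) (k : ZMod N) : List (ZMod N) :=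
  List.replicate (monomialSize N k) k

/-- The sum `⊕` of two tuples:
`(a₁,…,aₘ) ⊕ (b₁,…,bₗ) = (a₁+bₗ, a₂, …, aₘ₋₁, aₘ+b₁, b₂, …, bₗ₋₁)`. -/
def oplus {N : ℕ} (a b : List (ZMod N)) : List (ZMod N) :=
  (a.headD 0 + b.getLastD 0) ::
    ((a.drop 1).dropLast ++ (a.getLastD 0 + b.headD 0) :: (b.drop 1).dropLast)

/-- Two tuples are equivalent (`∼`) if one is obtained from the other by a cyclic
permutation, possibly composed with order reversal. -/
def TupEquiv {N : ℕ} (c d : List (ZMod N)) : Prop :=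
  (∃ i, d = c.rotate i) ∨ (∃ i, d = c.reverse.rotate i)

/-- A tuple is reducible if it is equivalent to a sum `a ⊕ b` where `b` is a solution of
`(E_N)` and both `a`, `b` have length at least `3`. -/
def IsReducibleE {N : ℕ} (c : List (ZMod N)) : Prop :=
  ∃ a b : List (ZMod N), 3 ≤ a.length ∧ 3 ≤ b.length ∧ IsSolutionE b ∧
    TupEquiv c (oplus a b)

/-- An irreducible solution of `(E_N)`: a solution of size at least `3` that is not
reducible (the solution `(0,0)` is not considered irreducible). -/
def IsIrreducibleE {N : ℕ} (c : List (ZMod N)) : Prop :=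
  IsSolutionE c ∧ 3 ≤ c.length ∧ ¬ IsReducibleE c

/-- A reducible solution of `(E_N)`: a solution that is not irreducible. -/
def IsReducibleSol {N : ℕ} (c : List (ZMod N)) : Prop :=
  IsSolutionE c ∧ ¬ IsIrreducibleE c

/-- `N` is monomially irreducible if for every nonzero `k ∈ ZMod N` the `k`-monomial
minimal solution of `(E_N)` is irreducible. -/
def MonomiallyIrreducible (N : ℕ) : Prop :=
  ∀ k : ZMod N, k ≠ 0 → IsIrreducibleE (monoSol N k)

/-- `N` is quasi monomially irreducible if for every integer `k` coprime to `N` the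
`(k mod N)`-monomial minimal solution of `(E_N)` is irreducible. -/
def QuasiMonomiallyIrreducible (N : ℕ) : Prop :=
  ∀ k : ℤ, Int.gcd k (N : ℤ) = 1 → IsIrreducibleE (monoSol N (k : ZMod N))

/-- `N` is semi monomially irreducible: if `N` is even but not divisible by `4`, this
requires that for every integer `a` coprime to `N/2` the `(2a mod N)`-monomial minimal
solution of `(E_N)` is irreducible; otherwise (i.e. `N` odd or divisible by `4`), it
requires the same for every integer `a` coprime to `N`. -/
def SemiMonomiallyIrreducible (N : ℕ) : Prop :=
  if 2 ∣ N ∧ ¬ (4 ∣ N) then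
    ∀ a : ℤ, Int.gcd a ((N / 2 : ℕ) : ℤ) = 1 →
      IsIrreducibleE (monoSol N ((2 * a : ℤ) : ZMod N))
  else
    ∀ a : ℤ, Int.gcd a (N : ℤ) = 1 →
      IsIrreducibleE (monoSol N ((2 * a : ℤ) : ZMod N))


section Aux

variable {N : ℕ}

lemma Mword_cons (x : ZMod N) (l : List (ZMod N)) :
    Mword (x :: l) = Mword l * genMat x := by
  simp [Mword]

lemma Mword_append (l₁ l₂ : List (ZMod N)) :
    Mword (l₁ ++ l₂) = Mword l₂ * Mword l₁ := by
  simp [Mword]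

lemma Mword_singleton (x : ZMod N) : Mword [x] = genMat x := by
  simp [Mword]

lemma Mword_replicate (n : ℕ) :
    Mword (List.replicate n (2 : ZMod N)) =
      !![1 + (n : ZMod N), -(n : ZMod N); (n : ZMod N), 1 - (n : ZMod N)] := by
  induction n with
  | zero => simp [Mword, Matrix.one_fin_two]
  | succ n ih =>
      rw [List.replicate_succ, Mword_cons, ih, genMat, Matrix.mul_fin_two]
      push_cast
      congr 1 <;> ring

lemma zmodTwoNeZero (hN : 3 ≤ N) : (2 : ZMod N) ≠ 0 := by
  have : NeZero N := ⟨by omega⟩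
  intro h
  have : ((2 : ℕ) : ZMod N) = 0 := by push_cast; exact h
  rw [ZMod.natCast_eq_zero_iff] at this
  have := Nat.le_of_dvd (by norm_num) this
  omega

lemma sol_replicate_iff (hN : 3 ≤ N) (n : ℕ) :
    IsSolutionE (List.replicate n (2 : ZMod N)) ↔ (n : ZMod N) = 0 := by
  rw [IsSolutionE, Mword_replicate]
  constructor
  · rintro (h | h)
    · have := congrFun (congrFun h 1) 0
      simpa using this
    · have h10 := congrFun (congrFun h 1) 0
      have h00 := congrFun (congrFun h 0) 0
      simp at h10 h00
      rw [h10] at h00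
      exfalso
      apply zmodTwoNeZero hN
      linear_combination h00
  · intro h
    left
    rw [h]
    simp [Matrix.one_fin_two]

lemma monomialSize_two (hN : 3 ≤ N) : monomialSize N (2 : ZMod N) = N := by
  have : NeZero N := ⟨by omega⟩
  have hmem : N ∈ {n : ℕ | 0 < n ∧ IsSolutionE (List.replicate n (2 : ZMod N))} := by
    refine ⟨by omega, ?_⟩
    rw [sol_replicate_iff hN]
    exact ZMod.natCast_self N
  refine le_antisymm (Nat.sInf_le hmem) ?_
  refine le_csInf ⟨N, hmem⟩ ?_
  rintro n ⟨hn, hsol⟩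
  rw [sol_replicate_iff hN, ZMod.natCast_eq_zero_iff] at hsol
  exact Nat.le_of_dvd hn hsol

lemma not_reducible_replicate_two (hN : 3 ≤ N) :
    ¬ IsReducibleE (List.replicate N (2 : ZMod N)) := by
  have : NeZero N := ⟨by omega⟩
  rintro ⟨a, b, ha, hb, hsol, hequiv⟩
  have heq : oplus a b = List.replicate N (2 : ZMod N) := by
    rcases hequiv with ⟨i, hi⟩ | ⟨i, hi⟩ <;>
      simpa [List.rotate_replicate, List.reverse_replicate] using hi
  have hlen : (oplus a b).length = N := by rw [heq]; simp
  have hlen' : a.length - 2 + (b.length - 2) + 2 = N := by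
    simp [oplus] at hlen; omega
  set m := b.length - 2 with hm
  have hm1 : 1 ≤ m := by omega
  have hm2 : m + 3 ≤ N := by omega
  have hbne : b ≠ [] := by
    intro h; rw [h] at hb; simp at hb
  have hdne : b.drop 1 ≠ [] := by
    intro h
    have := congrArg List.length h
    simp at this; omega
  have hmem : ∀ x ∈ (b.drop 1).dropLast, x = (2 : ZMod N) := by
    intro x hx
    have hx' : x ∈ oplus a b := by
      simp only [oplus, List.mem_cons, List.mem_append]
      tauto
    rw [heq] at hx'
    exact List.eq_of_mem_replicate hx'
  have ht2 : (b.drop 1).dropLast = List.replicate m (2 : ZMod N) := by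
    have h1 := List.eq_replicate_of_mem hmem
    have h2 : (b.drop 1).dropLast.length = m := by simp; omega
    rwa [h2] at h1
  have hbshape : b = b.head hbne ::
      (List.replicate m (2 : ZMod N) ++ [(b.drop 1).getLast hdne]) := by
    conv_lhs => rw [← List.cons_head_tail hbne]
    congr 1
    rw [← List.drop_one, ← ht2]
    exact (List.dropLast_append_getLast hdne).symm
  have hmz : (m : ZMod N) ≠ 0 := by
    intro h
    rw [ZMod.natCast_eq_zero_iff] at h
    have := Nat.le_of_dvd (by omega) h
    omega
  have hmz2 : ((m + 2 : ℕ) : ZMod N) ≠ 0 := by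
    intro h
    rw [ZMod.natCast_eq_zero_iff] at h
    have := Nat.le_of_dvd (by omega) h
    omega
  rcases hsol with h | h <;>
  · rw [hbshape, Mword_cons, Mword_append, Mword_singleton, Mword_replicate] at h
    have h11 := congrFun (congrFun h 1) 1
    simp [genMat, Matrix.mul_apply, Fin.sum_univ_two] at h11
    first
    | exact hmz2 (by push_cast; linear_combination -h11)
    | exact hmz (by push_cast; linear_combination -h11)
    | exact hmz2 (by push_cast; linear_combination h11)
    | exact hmz (by push_cast; linear_combination h11)

end Aux

/-- for `N ≥ 3`, the `2`-monomial minimal solution of `(E_N)` is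
irreducible, has size `N`, and `M_N(2, …, 2) = Id` over `ZMod N`. -/
theorem stmt_9 (N : ℕ) (hN : 3 ≤ N) :
    IsIrreducibleE (monoSol N (2 : ZMod N)) ∧ monomialSize N (2 : ZMod N) = N ∧
      Mword (List.replicate N (2 : ZMod N)) = 1 := by
  have hsize : monomialSize N (2 : ZMod N) = N := monomialSize_two hN
  have hsol : Mword (List.replicate N (2 : ZMod N)) = 1 := by
    rw [Mword_replicate, ZMod.natCast_self]
    simp [Matrix.one_fin_two]
  refine ⟨⟨?_, ?_, ?_⟩, hsize, hsol⟩
  · rw [monoSol, hsize]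
    exact Or.inl hsol
  · rw [monoSol, hsize]
    simpa using hN
  · rw [monoSol, hsize]
    exact not_reducible_replicate_two hN
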